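/- Let N ≥ 2 and s ∈ ℝ, and let w := w_{N,s}. There exists a constant C₁ > 1, independent of N, s, t, n and 𝔟, such that for every t > 0 and every n ≥ 1 the Kawahara Picard iterates satisfy ‖g_n[w](t)‖_{L¹(ℝ)} ≤ (C₁ N t ‖w‖_{L¹})^{n−1} ‖w‖_{L¹} and ‖g_n[w](t)‖_{L²(ℝ)} ≤ (C₁ N t ‖w‖_{L¹})^{n−1} ‖w‖_{L²}. -/

import Mathlib

open MeasureTheory Filter
open scoped ENNReal NNReal Topology

noncomputable section

/-- Convolution of two functions on `ℝ` with respect to Lebesgue measure. -/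
def convR (f g : ℝ → ℂ) : ℝ → ℂ := fun x => ∫ y, f y * g (x - y)

/-- The `L¹` norm `∫ |f|`. -/
def L1R (f : ℝ → ℂ) : ℝ≥0∞ := ∫⁻ x, (‖f x‖₊ : ℝ≥0∞)

/-- The `L²` norm `(∫ |f|²)^{1/2}`. -/
def L2R (f : ℝ → ℂ) : ℝ≥0∞ := (∫⁻ x, (‖f x‖₊ : ℝ≥0∞) ^ 2) ^ ((1 : ℝ) / 2)

/-- The `H^s` Sobolev norm read on the Fourier side. -/
def HsR (s : ℝ) (f : ℝ → ℂ) : ℝ≥0∞ :=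
  (∫⁻ ξ : ℝ, ENNReal.ofReal ((1 + ξ ^ 2) ^ s) * (‖f ξ‖₊ : ℝ≥0∞) ^ 2) ^ ((1 : ℝ) / 2)

/-- The datum `w_{N,s} = (log N)⁻¹ N^{−s} 1_{[N−1,N+1] ∪ [−N−1,−N+1]}`. -/
def wNs (N s : ℝ) : ℝ → ℂ := fun ξ =>
  (((Real.log N)⁻¹ * N ^ (-s) : ℝ) : ℂ) *
    (Set.Icc (N - 1) (N + 1) ∪ Set.Icc (-N - 1) (-N + 1)).indicator
      (fun _ => (1 : ℂ)) ξ

/-- The property that `g : ℕ → ℝ → (ℝ → ℂ)` is the family of Fourier-side Picard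
iterates for the Kawahara equation `∂ₜu − ∂ₓ⁵u + 𝔟∂ₓ³u + ∂ₓ(u²) = 0` with Fourier
datum `w`: `g 1 t ξ = e^{it(ξ⁵+𝔟ξ³)} w(ξ)` and, for `n ≥ 2`,
`g n t ξ = −iξ Σ_{n₁+n₂=n, n₁,n₂≥1} ∫₀ᵗ e^{i(t−t')(ξ⁵+𝔟ξ³)} (g n₁ t' ∗ g n₂ t')(ξ) dt'`. -/
def KawPicard (b : ℝ) (w : ℝ → ℂ) (g : ℕ → ℝ → ℝ → ℂ) : Prop :=
  (∀ t ξ : ℝ, g 1 t ξ = Complex.exp (Complex.I * t * (ξ ^ 5 + b * ξ ^ 3)) * w ξ) ∧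
  (∀ n, 2 ≤ n → ∀ t ξ : ℝ, g n t ξ =
    -Complex.I * ξ * ∑ k ∈ Finset.Ioo 0 n,
      ∫ t' in (0:ℝ)..t, Complex.exp (Complex.I * (t - t') * (ξ ^ 5 + b * ξ ^ 3)) *
        convR (g k t') (g (n - k) t') ξ)

namespace S12

/-- Nonnegative convolution on `ℝ`. -/
def Cv (f g : ℝ → ℝ≥0∞) : ℝ → ℝ≥0∞ := fun x => ∫⁻ y, f y * g (x - y)

def Sset (N : ℝ) : Set ℝ := Set.Icc (N - 1) (N + 1) ∪ Set.Icc (-N - 1) (-N + 1)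

def chi (N : ℝ) : ℝ → ℝ≥0∞ := (Sset N).indicator 1

/-- `P N m = chi^{*(m+1)}`, the `(m+1)`-fold convolution power. -/
def P (N : ℝ) : ℕ → ℝ → ℝ≥0∞
  | 0 => chi N
  | (m + 1) => Cv (chi N) (P N m)

lemma measurableSet_Sset (N : ℝ) : MeasurableSet (Sset N) :=
  measurableSet_Icc.union measurableSet_Icc

lemma measurable_chi (N : ℝ) : Measurable (chi N) :=
  (measurable_const.indicator (measurableSet_Sset N))

lemma chi_le_one (N : ℝ) (x : ℝ) : chi N x ≤ 1 := by
  unfold chi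
  by_cases h : x ∈ Sset N <;> simp [Set.indicator_of_mem, Set.indicator_of_notMem, h]

lemma chi_ne_top (N : ℝ) (x : ℝ) : chi N x ≠ ⊤ :=
  ((chi_le_one N x).trans_lt ENNReal.one_lt_top).ne

lemma chi_sq (N : ℝ) (x : ℝ) : chi N x ^ 2 = chi N x := by
  unfold chi
  by_cases h : x ∈ Sset N <;> simp [Set.indicator_of_mem, Set.indicator_of_notMem, h]

lemma lint_chi {N : ℝ} (hN : 2 ≤ N) : ∫⁻ x, chi N x = 4 := by
  unfold chi
  rw [lintegral_indicator (measurableSet_Sset N)]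
  simp only [Pi.one_apply]
  rw [setLIntegral_one]
  unfold Sset
  have hdisj : Disjoint (Set.Icc (N - 1) (N + 1)) (Set.Icc (-N - 1) (-N + 1)) := by
    rw [Set.disjoint_left]
    intro x hx hx'
    simp only [Set.mem_Icc] at hx hx'
    linarith [hx.1, hx'.2]
  rw [measure_union hdisj measurableSet_Icc, Real.volume_Icc, Real.volume_Icc,
    show N + 1 - (N - 1) = 2 by ring, show -N + 1 - (-N - 1) = 2 by ring]
  rw [← ENNReal.ofReal_add (by norm_num) (by norm_num)]
  norm_num

lemma chi_eq_zero {N : ℝ} (hN : 2 ≤ N) {x : ℝ} (hx : N + 1 < |x|) : chi N x = 0 := by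
  apply Set.indicator_of_notMem
  intro h
  rcases lt_abs.mp hx with h' | h' <;> rcases h with h | h <;>
    simp only [Set.mem_Icc] at h <;> linarith [h.1, h.2]

lemma measurable_Cv {f g : ℝ → ℝ≥0∞} (hf : Measurable f) (hg : Measurable g) :
    Measurable (Cv f g) := by
  have h : Measurable fun p : ℝ × ℝ => f p.2 * g (p.1 - p.2) :=
    (hf.comp measurable_snd).mul (hg.comp (measurable_fst.sub measurable_snd))
  exact h.lintegral_prod_right'

lemma measurable_P (N : ℝ) : ∀ m, Measurable (P N m)
  | 0 => measurable_chi N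
  | (m + 1) => measurable_Cv (measurable_chi N) (measurable_P N m)

lemma P_le {N : ℝ} (hN : 2 ≤ N) : ∀ m x, P N m x ≤ 4 ^ m
  | 0, x => by simpa [P] using chi_le_one N x
  | (m + 1), x => by
    calc P N (m + 1) x = ∫⁻ y, chi N y * P N m (x - y) := rfl
      _ ≤ ∫⁻ y, chi N y * 4 ^ m :=
        lintegral_mono fun y => mul_le_mul_right (P_le hN m (x - y)) _
      _ = (∫⁻ y, chi N y) * 4 ^ m := lintegral_mul_const' _ _ (ENNReal.pow_ne_top (by norm_num))
      _ = 4 ^ (m + 1) := by rw [lint_chi hN]; ring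

lemma P_ne_top {N : ℝ} (hN : 2 ≤ N) (m : ℕ) (x : ℝ) : P N m x ≠ ⊤ :=
  ((P_le hN m x).trans_lt (ENNReal.pow_ne_top (by norm_num)).lt_top).ne

lemma lint_Cv {f g : ℝ → ℝ≥0∞} (hf : Measurable f) (hg : Measurable g) :
    ∫⁻ x, Cv f g x = (∫⁻ x, f x) * ∫⁻ x, g x := by
  have hm : AEMeasurable (fun p : ℝ × ℝ => f p.2 * g (p.1 - p.2))
      ((volume : Measure ℝ).prod volume) :=
    ((hf.comp measurable_snd).mul (hg.comp (measurable_fst.sub measurable_snd))).aemeasurable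
  calc ∫⁻ x, Cv f g x = ∫⁻ x, ∫⁻ y, f y * g (x - y) := rfl
    _ = ∫⁻ y, ∫⁻ x, f y * g (x - y) := lintegral_lintegral_swap hm
    _ = ∫⁻ y, f y * ∫⁻ x, g (x - y) := by
        refine lintegral_congr fun y => ?_
        exact lintegral_const_mul'' (f y) ((hg.comp (measurable_id.sub measurable_const)).aemeasurable)
    _ = ∫⁻ y, f y * ∫⁻ x, g x := by
        refine lintegral_congr fun y => ?_
        rw [lintegral_sub_right_eq_self g y]
    _ = (∫⁻ x, f x) * ∫⁻ x, g x := lintegral_mul_const'' _ hf.aemeasurable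

lemma lint_P {N : ℝ} (hN : 2 ≤ N) : ∀ m, ∫⁻ x, P N m x = 4 ^ (m + 1)
  | 0 => by rw [show P N 0 = chi N from rfl, lint_chi hN]; norm_num
  | (m + 1) => by
    rw [show P N (m + 1) = Cv (chi N) (P N m) from rfl,
      lint_Cv (measurable_chi N) (measurable_P N m), lint_chi hN, lint_P hN m]
    ring

lemma Cv_assoc {N : ℝ} {u v : ℝ → ℝ≥0∞} (hu : Measurable u) (hv : Measurable v)
    (hvt : ∀ x, v x ≠ ⊤) :
    Cv (Cv (chi N) u) v = Cv (chi N) (Cv u v) := by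
  funext x
  have hm : AEMeasurable (fun p : ℝ × ℝ => chi N p.2 * u (p.1 - p.2) * v (x - p.1))
      ((volume : Measure ℝ).prod volume) := by
    exact ((((measurable_chi N).comp measurable_snd).mul
      (hu.comp (measurable_fst.sub measurable_snd))).mul
      (hv.comp (measurable_const.sub measurable_fst))).aemeasurable
  calc Cv (Cv (chi N) u) v x
      = ∫⁻ z, (∫⁻ y, chi N y * u (z - y)) * v (x - z) := rfl
    _ = ∫⁻ z, ∫⁻ y, chi N y * u (z - y) * v (x - z) := by
        refine lintegral_congr fun z => ?_
        exact (lintegral_mul_const' _ _ (hvt _)).symm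
    _ = ∫⁻ y, ∫⁻ z, chi N y * u (z - y) * v (x - z) := lintegral_lintegral_swap hm
    _ = ∫⁻ y, chi N y * ∫⁻ z, u (z - y) * v (x - z) := by
        refine lintegral_congr fun y => ?_
        rw [← lintegral_const_mul' _ _ (chi_ne_top N y)]
        exact lintegral_congr fun z => by ring
    _ = ∫⁻ y, chi N y * Cv u v (x - y) := by
        refine lintegral_congr fun y => ?_
        congr 1
        calc ∫⁻ z, u (z - y) * v (x - z)
            = ∫⁻ z, u (z + y - y) * v (x - (z + y)) :=
              (lintegral_add_right_eq_self (fun z => u (z - y) * v (x - z)) y).symm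
          _ = ∫⁻ z, u z * v ((x - y) - z) := by
              refine lintegral_congr fun z => ?_
              rw [show z + y - y = z by ring, show x - (z + y) = x - y - z by ring]
          _ = Cv u v (x - y) := rfl
    _ = Cv (chi N) (Cv u v) x := rfl

lemma Cv_P {N : ℝ} (hN : 2 ≤ N) : ∀ a b, Cv (P N a) (P N b) = P N (a + b + 1)
  | 0, b => by rw [show (0 : ℕ) + b + 1 = b + 1 by omega]; rfl
  | (a + 1), b => by
    have h := Cv_assoc (N := N) (measurable_P N a) (measurable_P N b)
      (fun x => P_ne_top hN b x)
    calc Cv (P N (a + 1)) (P N b) = Cv (Cv (chi N) (P N a)) (P N b) := rfl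
      _ = Cv (chi N) (Cv (P N a) (P N b)) := h
      _ = Cv (chi N) (P N (a + b + 1)) := by rw [Cv_P hN a b]
      _ = P N (a + 1 + b + 1) := by rw [show a + 1 + b + 1 = (a + b + 1) + 1 by omega]; rfl

lemma P_zero {N : ℝ} (hN : 2 ≤ N) (m : ℕ) :
    ∀ (x : ℝ), ((m : ℝ) + 1) * (N + 1) < |x| → P N m x = 0 := by
  induction m with
  | zero =>
    intro x hx
    exact chi_eq_zero hN (by push_cast at hx; linarith)
  | succ m ih =>
    intro x hx
    have hzero : ∀ y, chi N y * P N m (x - y) = 0 := by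
      intro y
      by_cases hy : y ∈ Sset N
      · have hyb : |y| ≤ N + 1 := by
          rw [abs_le]
          rcases hy with h | h <;> simp only [Set.mem_Icc] at h <;> constructor <;> linarith
        have hxb : ((m : ℝ) + 1) * (N + 1) < |x - y| := by
          have h1 := abs_sub_abs_le_abs_sub x y
          push_cast at hx
          nlinarith
        rw [ih _ hxb, mul_zero]
      · rw [chi, Set.indicator_of_notMem hy, zero_mul]
    calc P N (m + 1) x = ∫⁻ y, chi N y * P N m (x - y) := rfl
      _ = 0 := by simp only [hzero]; exact lintegral_zero

lemma abs_mul_P {N : ℝ} (hN : 2 ≤ N) (m : ℕ) (x : ℝ) :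
    ENNReal.ofReal |x| * P N m x ≤ ENNReal.ofReal (((m : ℝ) + 1) * (N + 1)) * P N m x := by
  by_cases hx : |x| ≤ ((m : ℝ) + 1) * (N + 1)
  · exact mul_le_mul_left (ENNReal.ofReal_le_ofReal hx) _
  · rw [P_zero hN m _ (not_le.mp hx)]
    simp

lemma sum_inv_sq_aux : ∀ m : ℕ, 1 ≤ m → ∑ k ∈ Finset.Icc 1 m, ((k : ℝ) ^ 2)⁻¹ ≤ 2 - (m : ℝ)⁻¹ := by
  intro m
  induction m with
  | zero => intro h; omega
  | succ m ih =>
    intro _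
    rcases Nat.eq_zero_or_pos m with rfl | hm
    · norm_num
    have h1 : (1 : ℝ) ≤ m := by exact_mod_cast hm
    rw [Finset.sum_Icc_succ_top (by omega : 1 ≤ m + 1)]
    have h2 := ih hm
    have e1 : (((m : ℝ) + 1) ^ 2)⁻¹ ≤ ((m : ℝ) * ((m : ℝ) + 1))⁻¹ := by
      apply inv_anti₀ (by positivity)
      nlinarith
    have e2 : ((m : ℝ) * ((m : ℝ) + 1))⁻¹ = (m : ℝ)⁻¹ - ((m : ℝ) + 1)⁻¹ := by
      rw [mul_inv]
      field_simp
      ring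
    push_cast
    push_cast at h2
    linarith

lemma sum_inv_sq (n : ℕ) : ∑ k ∈ Finset.Ioo 0 n, ((k : ℝ) ^ 2)⁻¹ ≤ 2 := by
  have he : Finset.Ioo 0 n = Finset.Icc 1 (n - 1) := by
    ext k; simp only [Finset.mem_Ioo, Finset.mem_Icc]; omega
  rw [he]
  rcases Nat.lt_or_ge n 2 with h | h
  · interval_cases n <;> simp
  · have := sum_inv_sq_aux (n - 1) (by omega)
    have h0 : (0 : ℝ) ≤ ((n - 1 : ℕ) : ℝ)⁻¹ := by positivity
    linarith

lemma sum_reflect (n : ℕ) (f : ℕ → ℝ) :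
    ∑ k ∈ Finset.Ioo 0 n, f (n - k) = ∑ k ∈ Finset.Ioo 0 n, f k := by
  refine Finset.sum_nbij' (fun k => n - k) (fun k => n - k) ?_ ?_ ?_ ?_ ?_ <;>
    intro a ha <;> simp only [Finset.mem_Ioo] at * <;> omega

lemma sigma_le {n : ℕ} (hn : 2 ≤ n) :
    ∑ k ∈ Finset.Ioo 0 n, ((k : ℝ) ^ 2)⁻¹ * (((n - k : ℕ) : ℝ) ^ 2)⁻¹ ≤ 16 / (n : ℝ) ^ 2 := by
  have hterm : ∀ k ∈ Finset.Ioo 0 n,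
      ((k : ℝ) ^ 2)⁻¹ * (((n - k : ℕ) : ℝ) ^ 2)⁻¹ ≤
        4 / (n : ℝ) ^ 2 * (((k : ℝ) ^ 2)⁻¹ + (((n - k : ℕ) : ℝ) ^ 2)⁻¹) := by
    intro k hk
    simp only [Finset.mem_Ioo] at hk
    have hk1 : (1 : ℝ) ≤ (k : ℝ) := by exact_mod_cast hk.1
    have hnk1 : (1 : ℝ) ≤ ((n - k : ℕ) : ℝ) := by
      have : 1 ≤ n - k := by omega
      exact_mod_cast this
    have hsum : (k : ℝ) + ((n - k : ℕ) : ℝ) = (n : ℝ) := by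
      have : k + (n - k) = n := by omega
      exact_mod_cast this
    set a := (k : ℝ) with ha'
    set c := ((n - k : ℕ) : ℝ) with hc'
    have ha : 0 < a := by linarith
    have hc : 0 < c := by linarith
    rw [← hsum]
    rw [div_mul_eq_mul_div, le_div_iff₀ (by positivity)]
    have key : (a + c) ^ 2 ≤ 4 * (a ^ 2 + c ^ 2) := by nlinarith [sq_nonneg (a - c)]
    have expand : (a ^ 2)⁻¹ * (c ^ 2)⁻¹ * (a + c) ^ 2 ≤
        (a ^ 2)⁻¹ * (c ^ 2)⁻¹ * (4 * (a ^ 2 + c ^ 2)) := by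
      apply mul_le_mul_of_nonneg_left key (by positivity)
    refine expand.trans (le_of_eq ?_)
    field_simp
    ring
  calc ∑ k ∈ Finset.Ioo 0 n, ((k : ℝ) ^ 2)⁻¹ * (((n - k : ℕ) : ℝ) ^ 2)⁻¹
      ≤ ∑ k ∈ Finset.Ioo 0 n,
          4 / (n : ℝ) ^ 2 * (((k : ℝ) ^ 2)⁻¹ + (((n - k : ℕ) : ℝ) ^ 2)⁻¹) :=
        Finset.sum_le_sum hterm
    _ = 4 / (n : ℝ) ^ 2 * ((∑ k ∈ Finset.Ioo 0 n, ((k : ℝ) ^ 2)⁻¹) +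
          ∑ k ∈ Finset.Ioo 0 n, (((n - k : ℕ) : ℝ) ^ 2)⁻¹) := by
        rw [← Finset.mul_sum, Finset.sum_add_distrib]
    _ ≤ 4 / (n : ℝ) ^ 2 * (2 + 2) := by
        have h1 := sum_inv_sq n
        have h2 : ∑ k ∈ Finset.Ioo 0 n, (((n - k : ℕ) : ℝ) ^ 2)⁻¹ ≤ 2 := by
          rw [sum_reflect n (fun k => ((k : ℝ) ^ 2)⁻¹)]
          exact sum_inv_sq n
        have hpos : (0 : ℝ) ≤ 4 / (n : ℝ) ^ 2 := by positivity
        nlinarith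
    _ = 16 / (n : ℝ) ^ 2 := by ring

lemma norm_exp_eq_one {z : ℂ} (hz : z.re = 0) : ‖Complex.exp z‖ = 1 := by
  rw [Complex.norm_exp, hz, Real.exp_zero]

lemma norm_exp_I_mul (a b t' ξ : ℝ) :
    ‖Complex.exp (Complex.I * (a - (t' : ℂ)) * ((ξ : ℂ) ^ 5 + (b : ℂ) * (ξ : ℂ) ^ 3))‖ = 1 := by
  apply norm_exp_eq_one
  have h1 : ((a : ℂ) - (t' : ℂ)) = ((a - t' : ℝ) : ℂ) := by push_cast; ring
  have h2 : ((ξ : ℂ) ^ 5 + (b : ℂ) * (ξ : ℂ) ^ 3) = ((ξ ^ 5 + b * ξ ^ 3 : ℝ) : ℂ) := by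
    push_cast; ring
  rw [h1, h2]
  simp [Complex.mul_re, Complex.mul_im, ← Complex.ofReal_pow]

def Ms (N s : ℝ) : ℝ := (Real.log N)⁻¹ * N ^ (-s)

lemma Ms_pos {N : ℝ} (hN : 2 ≤ N) (s : ℝ) : 0 < Ms N s :=
  mul_pos (inv_pos.mpr (Real.log_pos (by linarith))) (Real.rpow_pos_of_pos (by linarith) _)

/-- The inductive pointwise bound constant. -/
def DD (N s : ℝ) (n : ℕ) (t : ℝ) : ℝ :=
  ((n : ℝ) ^ 2)⁻¹ * (84 * N * Ms N s * t) ^ (n - 1) * Ms N s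

lemma DD_nonneg {N : ℝ} (hN : 2 ≤ N) (s : ℝ) (m : ℕ) {τ : ℝ} (hτ : 0 ≤ τ) :
    0 ≤ DD N s m τ := by
  have hM := (Ms_pos hN s).le
  unfold DD
  have h84 : 0 ≤ 84 * N * Ms N s * τ := by
    apply mul_nonneg (mul_nonneg (mul_nonneg (by norm_num) (by linarith)) hM) hτ
  exact mul_nonneg (mul_nonneg (by positivity) (pow_nonneg h84 _)) hM

lemma norm_exp_I_mul_one (a b ξ : ℝ) :
    ‖Complex.exp (Complex.I * (a : ℂ) * ((ξ : ℂ) ^ 5 + (b : ℂ) * (ξ : ℂ) ^ 3))‖ = 1 := by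
  apply norm_exp_eq_one
  have h2 : ((ξ : ℂ) ^ 5 + (b : ℂ) * (ξ : ℂ) ^ 3) = ((ξ ^ 5 + b * ξ ^ 3 : ℝ) : ℂ) := by
    push_cast; ring
  rw [h2]
  simp [Complex.mul_re, Complex.mul_im, ← Complex.ofReal_pow]

lemma nnnorm_wNs {N : ℝ} (hN : 2 ≤ N) (s ξ : ℝ) :
    (‖wNs N s ξ‖₊ : ℝ≥0∞) = ENNReal.ofReal (Ms N s) * chi N ξ := by
  have hM := Ms_pos hN s
  have hrw : wNs N s ξ = ((Ms N s : ℝ) : ℂ) * (Sset N).indicator (fun _ => (1 : ℂ)) ξ := rfl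
  rw [hrw]
  by_cases h : ξ ∈ Sset N
  · rw [Set.indicator_of_mem h, mul_one, chi, Set.indicator_of_mem h, Pi.one_apply, mul_one,
      ← enorm_eq_nnnorm, ← ofReal_norm, Complex.norm_real, Real.norm_eq_abs, abs_of_pos hM]
  · rw [Set.indicator_of_notMem h, mul_zero, chi, Set.indicator_of_notMem h, mul_zero]
    simp

lemma key {N : ℝ} (hN : 2 ≤ N) (s b : ℝ) (g : ℕ → ℝ → ℝ → ℂ)
    (hg : KawPicard b (wNs N s) g) (n : ℕ) :
    1 ≤ n → ∀ t : ℝ, 0 < t → ∀ ξ : ℝ,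
      (‖g n t ξ‖₊ : ℝ≥0∞) ≤ ENNReal.ofReal (DD N s n t) * P N (n - 1) ξ := by
  induction n using Nat.strong_induction_on with
  | _ n ih =>
  intro hn t ht ξ
  have hM := Ms_pos hN s
  rcases Nat.lt_or_ge n 2 with h2 | h2
  · -- base case n = 1
    obtain rfl : n = 1 := by omega
    rw [hg.1 t ξ, ← enorm_eq_nnnorm, ← ofReal_norm, norm_mul, norm_exp_I_mul_one t b ξ, one_mul,
      ofReal_norm, enorm_eq_nnnorm, nnnorm_wNs hN s ξ]
    have hDD : DD N s 1 t = Ms N s := by unfold DD; norm_num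
    rw [hDD]
    exact le_refl _
  -- inductive step, n ≥ 2
  have hn1 : (1 : ℕ) ≤ n := hn
  -- abbreviations (as plain terms)
  have hCpos : 0 < 84 * N * Ms N s := by positivity
  have hPfin : P N (n - 1) ξ ≠ ⊤ := P_ne_top hN (n - 1) ξ
  have htoR : (0 : ℝ) ≤ (P N (n - 1) ξ).toReal := ENNReal.toReal_nonneg
  -- the per-k bound on the time integral
  have hterm : ∀ k ∈ Finset.Ioo 0 n,
      (‖∫ t' in (0:ℝ)..t, Complex.exp (Complex.I * ((t : ℂ) - (t' : ℂ)) *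
          ((ξ : ℂ) ^ 5 + (b : ℂ) * (ξ : ℂ) ^ 3)) * convR (g k t') (g (n - k) t') ξ‖₊ : ℝ≥0∞)
        ≤ ENNReal.ofReal ((((k : ℝ) ^ 2)⁻¹ * (((n - k : ℕ) : ℝ) ^ 2)⁻¹ *
            (P N (n - 1) ξ).toReal * Ms N s ^ 2 * (84 * N * Ms N s) ^ (n - 2)) *
            (t ^ (n - 1) / ((n - 1 : ℕ) : ℝ))) := by
    intro k hk
    simp only [Finset.mem_Ioo] at hk
    have hk1 : 1 ≤ k := hk.1
    have hkn : k < n := hk.2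
    have hnk1 : 1 ≤ n - k := by omega
    have hnkn : n - k < n := by omega
    -- the constant for this k
    set Kk : ℝ := ((k : ℝ) ^ 2)⁻¹ * (((n - k : ℕ) : ℝ) ^ 2)⁻¹ *
        (P N (n - 1) ξ).toReal * Ms N s ^ 2 * (84 * N * Ms N s) ^ (n - 2) with hKk
    have hKk0 : 0 ≤ Kk := by
      rw [hKk]
      have : (0:ℝ) ≤ (84 * N * Ms N s) ^ (n-2) := pow_nonneg hCpos.le _
      positivity
    -- product of the two DD's
    have hDDmul : ∀ τ : ℝ, DD N s k τ * DD N s (n - k) τ * (P N (n - 1) ξ).toReal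
        = Kk * τ ^ (n - 2) := by
      intro τ
      have e1 : (k - 1) + (n - k - 1) = n - 2 := by omega
      calc DD N s k τ * DD N s (n - k) τ * (P N (n - 1) ξ).toReal
          = (((k : ℝ) ^ 2)⁻¹ * (((n - k : ℕ) : ℝ) ^ 2)⁻¹ * (P N (n - 1) ξ).toReal *
              Ms N s ^ 2) * ((84 * N * Ms N s * τ) ^ (k - 1) *
                (84 * N * Ms N s * τ) ^ (n - k - 1)) := by
            unfold DD; ring
        _ = (((k : ℝ) ^ 2)⁻¹ * (((n - k : ℕ) : ℝ) ^ 2)⁻¹ * (P N (n - 1) ξ).toReal *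
              Ms N s ^ 2) * ((84 * N * Ms N s) ^ (n - 2) * τ ^ (n - 2)) := by
            rw [← pow_add, e1, mul_pow]
        _ = Kk * τ ^ (n - 2) := by rw [hKk]; ring
    -- pointwise bound of the integrand
    have hptwise : ∀ t' ∈ Set.Ioc (0:ℝ) t,
        ‖Complex.exp (Complex.I * ((t : ℂ) - (t' : ℂ)) *
            ((ξ : ℂ) ^ 5 + (b : ℂ) * (ξ : ℂ) ^ 3)) * convR (g k t') (g (n - k) t') ξ‖
          ≤ Kk * t' ^ (n - 2) := by
      intro t' ht'
      rw [norm_mul, norm_exp_I_mul t b t' ξ, one_mul]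
      have hck : (‖convR (g k t') (g (n - k) t') ξ‖₊ : ℝ≥0∞)
          ≤ ENNReal.ofReal (DD N s k t') * ENNReal.ofReal (DD N s (n - k) t') *
              P N (n - 1) ξ := by
        calc (‖convR (g k t') (g (n - k) t') ξ‖₊ : ℝ≥0∞)
            = (‖∫ y, g k t' y * g (n - k) t' (ξ - y)‖₊ : ℝ≥0∞) := rfl
          _ ≤ ∫⁻ y, ‖g k t' y * g (n - k) t' (ξ - y)‖₊ :=
              enorm_integral_le_lintegral_enorm _
          _ = ∫⁻ y, (‖g k t' y‖₊ : ℝ≥0∞) * (‖g (n - k) t' (ξ - y)‖₊ : ℝ≥0∞) := by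
              simp only [nnnorm_mul, ENNReal.coe_mul]
          _ ≤ ∫⁻ y, (ENNReal.ofReal (DD N s k t') * P N (k - 1) y) *
                (ENNReal.ofReal (DD N s (n - k) t') * P N (n - k - 1) (ξ - y)) :=
              lintegral_mono fun y => mul_le_mul'
                (ih k hkn hk1 t' ht'.1 y) (ih (n - k) hnkn hnk1 t' ht'.1 (ξ - y))
          _ = ∫⁻ y, (ENNReal.ofReal (DD N s k t') * ENNReal.ofReal (DD N s (n - k) t')) *
                (P N (k - 1) y * P N (n - k - 1) (ξ - y)) := lintegral_congr fun y => by ring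
          _ = (ENNReal.ofReal (DD N s k t') * ENNReal.ofReal (DD N s (n - k) t')) *
                Cv (P N (k - 1)) (P N (n - k - 1)) ξ :=
              lintegral_const_mul' _ _
                (ENNReal.mul_ne_top ENNReal.ofReal_ne_top ENNReal.ofReal_ne_top)
          _ = ENNReal.ofReal (DD N s k t') * ENNReal.ofReal (DD N s (n - k) t') *
                P N (n - 1) ξ := by
              rw [Cv_P hN, show (k - 1) + (n - k - 1) + 1 = n - 1 by omega]
      have hDk0 : 0 ≤ DD N s k t' := DD_nonneg hN s k ht'.1.le
      have hDnk0 : 0 ≤ DD N s (n - k) t' := DD_nonneg hN s (n - k) ht'.1.le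
      have h5 : ENNReal.ofReal ‖convR (g k t') (g (n - k) t') ξ‖
          ≤ ENNReal.ofReal (DD N s k t' * DD N s (n - k) t' * (P N (n - 1) ξ).toReal) := by
        rw [ofReal_norm, enorm_eq_nnnorm]
        refine hck.trans (le_of_eq ?_)
        rw [ENNReal.ofReal_mul (mul_nonneg hDk0 hDnk0), ENNReal.ofReal_mul hDk0,
          ENNReal.ofReal_toReal hPfin]
      have h5' : ENNReal.ofReal ‖convR (g k t') (g (n - k) t') ξ‖
          ≤ ENNReal.ofReal (Kk * t' ^ (n - 2)) := by rw [← hDDmul t']; exact h5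
      exact (ENNReal.ofReal_le_ofReal_iff
        (mul_nonneg hKk0 (pow_nonneg ht'.1.le _))).mp h5' 
    -- integrate the bound
    have hGint : IntervalIntegrable (fun τ : ℝ => Kk * τ ^ (n - 2)) volume 0 t :=
      (Continuous.intervalIntegrable (by fun_prop) 0 t)
    have hIk : ‖∫ t' in (0:ℝ)..t, Complex.exp (Complex.I * ((t : ℂ) - (t' : ℂ)) *
        ((ξ : ℂ) ^ 5 + (b : ℂ) * (ξ : ℂ) ^ 3)) * convR (g k t') (g (n - k) t') ξ‖
          ≤ |∫ t' in (0:ℝ)..t, Kk * t' ^ (n - 2)| := by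
      apply intervalIntegral.norm_integral_le_abs_of_norm_le ?_ hGint
      rw [Set.uIoc_of_le ht.le]
      exact (ae_restrict_mem measurableSet_Ioc).mono hptwise
    have hcast2 : ((n - 2 : ℕ) : ℝ) + 1 = ((n - 1 : ℕ) : ℝ) := by
      rw [Nat.cast_sub (by omega), Nat.cast_sub (by omega)]; ring
    have hIval : ∫ t' in (0:ℝ)..t, Kk * t' ^ (n - 2)
        = Kk * (t ^ (n - 1) / ((n - 1 : ℕ) : ℝ)) := by
      rw [intervalIntegral.integral_const_mul, integral_pow]
      rw [zero_pow (by omega : n - 2 + 1 ≠ 0), sub_zero,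
        show n - 2 + 1 = n - 1 by omega, hcast2]
    have he1 : (1 : ℝ) ≤ ((n - 1 : ℕ) : ℝ) := by
      have : 1 ≤ n - 1 := by omega
      exact_mod_cast this
    have hIval0 : 0 ≤ Kk * (t ^ (n - 1) / ((n - 1 : ℕ) : ℝ)) := by
      apply mul_nonneg hKk0
      apply div_nonneg (pow_nonneg ht.le _) (by linarith)
    rw [← enorm_eq_nnnorm, ← ofReal_norm]
    apply ENNReal.ofReal_le_ofReal
    calc ‖_‖ ≤ |∫ t' in (0:ℝ)..t, Kk * t' ^ (n - 2)| := hIk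
      _ = Kk * (t ^ (n - 1) / ((n - 1 : ℕ) : ℝ)) := by rw [hIval, abs_of_nonneg hIval0]
      _ = ((k : ℝ) ^ 2)⁻¹ * (((n - k : ℕ) : ℝ) ^ 2)⁻¹ * (P N (n - 1) ξ).toReal *
            Ms N s ^ 2 * (84 * N * Ms N s) ^ (n - 2) * (t ^ (n - 1) / ((n - 1 : ℕ) : ℝ)) := by
          rw [hKk]
  -- now assemble
  have hσ0 : (0:ℝ) ≤ ∑ k ∈ Finset.Ioo 0 n, ((k : ℝ) ^ 2)⁻¹ * (((n - k : ℕ) : ℝ) ^ 2)⁻¹ :=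
    Finset.sum_nonneg fun k _ => by positivity
  have hσ := sigma_le h2
  have hcn : ((n - 1 : ℕ) : ℝ) + 1 = (n : ℝ) := by
    rw [Nat.cast_sub (by omega)]; ring
  have he1 : (1 : ℝ) ≤ ((n - 1 : ℕ) : ℝ) := by
    have : 1 ≤ n - 1 := by omega
    exact_mod_cast this
  have hn2R : (2 : ℝ) ≤ (n : ℝ) := by exact_mod_cast h2
  have hB0 : (0:ℝ) ≤ Ms N s ^ 2 * (84 * N * Ms N s) ^ (n - 2) *
      (t ^ (n - 1) / ((n - 1 : ℕ) : ℝ)) :=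
    mul_nonneg (mul_nonneg (sq_nonneg _) (pow_nonneg hCpos.le _))
      (div_nonneg (pow_nonneg ht.le _) (by linarith))
  rw [hg.2 n h2 t ξ]
  calc (‖-Complex.I * (ξ:ℂ) * ∑ k ∈ Finset.Ioo 0 n,
        ∫ t' in (0:ℝ)..t, Complex.exp (Complex.I * ((t : ℂ) - (t' : ℂ)) *
          ((ξ : ℂ) ^ 5 + (b : ℂ) * (ξ : ℂ) ^ 3)) * convR (g k t') (g (n - k) t') ξ‖₊ : ℝ≥0∞)
      = ENNReal.ofReal |ξ| * (‖∑ k ∈ Finset.Ioo 0 n,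
        ∫ t' in (0:ℝ)..t, Complex.exp (Complex.I * ((t : ℂ) - (t' : ℂ)) *
          ((ξ : ℂ) ^ 5 + (b : ℂ) * (ξ : ℂ) ^ 3)) * convR (g k t') (g (n - k) t') ξ‖₊ : ℝ≥0∞) := by
        rw [← enorm_eq_nnnorm, ← ofReal_norm, ← enorm_eq_nnnorm, ← ofReal_norm,
          ← ENNReal.ofReal_mul (abs_nonneg ξ)]
        congr 1
        rw [norm_mul, norm_mul, norm_neg, Complex.norm_I, one_mul, Complex.norm_real,
          Real.norm_eq_abs]
    _ ≤ ENNReal.ofReal |ξ| * ∑ k ∈ Finset.Ioo 0 n,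
        (‖∫ t' in (0:ℝ)..t, Complex.exp (Complex.I * ((t : ℂ) - (t' : ℂ)) *
          ((ξ : ℂ) ^ 5 + (b : ℂ) * (ξ : ℂ) ^ 3)) * convR (g k t') (g (n - k) t') ξ‖₊ : ℝ≥0∞) := by
        apply mul_le_mul_right
        calc _ ≤ ((∑ k ∈ Finset.Ioo 0 n,
            ‖∫ t' in (0:ℝ)..t, Complex.exp (Complex.I * ((t : ℂ) - (t' : ℂ)) *
              ((ξ : ℂ) ^ 5 + (b : ℂ) * (ξ : ℂ) ^ 3)) * convR (g k t') (g (n - k) t') ξ‖₊ :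
                ℝ≥0) : ℝ≥0∞) := ENNReal.coe_le_coe.mpr (nnnorm_sum_le _ _)
          _ = _ := ENNReal.coe_finset_sum _ _
    _ ≤ ENNReal.ofReal |ξ| * ∑ k ∈ Finset.Ioo 0 n,
        ENNReal.ofReal ((((k : ℝ) ^ 2)⁻¹ * (((n - k : ℕ) : ℝ) ^ 2)⁻¹ *
          (Ms N s ^ 2 * (84 * N * Ms N s) ^ (n - 2) * (t ^ (n - 1) / ((n - 1 : ℕ) : ℝ)))) *
          (P N (n - 1) ξ).toReal) := by
        apply mul_le_mul_right
        apply Finset.sum_le_sum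
        intro k hk
        refine (hterm k hk).trans (le_of_eq ?_)
        congr 1
        ring
    _ = ENNReal.ofReal |ξ| *
        (ENNReal.ofReal ((∑ k ∈ Finset.Ioo 0 n, ((k : ℝ) ^ 2)⁻¹ * (((n - k : ℕ) : ℝ) ^ 2)⁻¹) *
          (Ms N s ^ 2 * (84 * N * Ms N s) ^ (n - 2) * (t ^ (n - 1) / ((n - 1 : ℕ) : ℝ)))) *
          P N (n - 1) ξ) := by
        congr 1
        rw [Finset.sum_mul, ENNReal.ofReal_sum_of_nonneg
          (fun k _ => mul_nonneg (by positivity) hB0), Finset.sum_mul]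
        refine Finset.sum_congr rfl fun k hk => ?_
        rw [ENNReal.ofReal_mul (mul_nonneg (by positivity) hB0), ENNReal.ofReal_toReal hPfin]
    _ = ENNReal.ofReal ((∑ k ∈ Finset.Ioo 0 n, ((k : ℝ) ^ 2)⁻¹ * (((n - k : ℕ) : ℝ) ^ 2)⁻¹) *
          (Ms N s ^ 2 * (84 * N * Ms N s) ^ (n - 2) * (t ^ (n - 1) / ((n - 1 : ℕ) : ℝ)))) *
          (ENNReal.ofReal |ξ| * P N (n - 1) ξ) := by ring
    _ ≤ ENNReal.ofReal ((∑ k ∈ Finset.Ioo 0 n, ((k : ℝ) ^ 2)⁻¹ * (((n - k : ℕ) : ℝ) ^ 2)⁻¹) *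
          (Ms N s ^ 2 * (84 * N * Ms N s) ^ (n - 2) * (t ^ (n - 1) / ((n - 1 : ℕ) : ℝ)))) *
          (ENNReal.ofReal ((((n - 1 : ℕ) : ℝ) + 1) * (N + 1)) * P N (n - 1) ξ) :=
        mul_le_mul_right (abs_mul_P hN (n - 1) ξ) _
    _ ≤ ENNReal.ofReal (DD N s n t) * P N (n - 1) ξ := by
        rw [hcn, ← mul_assoc, ← ENNReal.ofReal_mul (mul_nonneg hσ0 hB0)]
        apply mul_le_mul_left
        apply ENNReal.ofReal_le_ofReal
        -- scalar inequality
        have h16 : (∑ k ∈ Finset.Ioo 0 n, ((k : ℝ) ^ 2)⁻¹ * (((n - k : ℕ) : ℝ) ^ 2)⁻¹) *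
            (n : ℝ) ^ 2 ≤ 16 := by
          have hpos : (0:ℝ) < (n : ℝ) ^ 2 := by positivity
          calc _ ≤ 16 / (n : ℝ) ^ 2 * (n : ℝ) ^ 2 := mul_le_mul_of_nonneg_right hσ hpos.le
            _ = 16 := by field_simp
        have he : ((n - 1 : ℕ) : ℝ) = (n : ℝ) - 1 := by
          rw [Nat.cast_sub (by omega)]; norm_num
        have hne : (n : ℝ) ≤ 2 * ((n - 1 : ℕ) : ℝ) := by rw [he]; linarith
        have hsc : (∑ k ∈ Finset.Ioo 0 n, ((k : ℝ) ^ 2)⁻¹ * (((n - k : ℕ) : ℝ) ^ 2)⁻¹) *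
            ((n : ℝ) * (N + 1)) / ((n - 1 : ℕ) : ℝ) ≤ 84 * N / (n : ℝ) ^ 2 := by
          rw [div_le_div_iff₀ (by linarith) (by positivity)]
          calc (∑ k ∈ Finset.Ioo 0 n, ((k : ℝ) ^ 2)⁻¹ * (((n - k : ℕ) : ℝ) ^ 2)⁻¹) *
              ((n : ℝ) * (N + 1)) * (n : ℝ) ^ 2
              = ((∑ k ∈ Finset.Ioo 0 n, ((k : ℝ) ^ 2)⁻¹ * (((n - k : ℕ) : ℝ) ^ 2)⁻¹) *
                (n : ℝ) ^ 2) * ((n : ℝ) * (N + 1)) := by ring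
            _ ≤ 16 * ((n : ℝ) * (N + 1)) := by
                apply mul_le_mul_of_nonneg_right h16
                have h0N : (0:ℝ) ≤ N + 1 := by linarith
                have h0n : (0:ℝ) ≤ (n : ℝ) := by positivity
                exact mul_nonneg h0n h0N
            _ ≤ 16 * ((2 * ((n - 1 : ℕ) : ℝ)) * (N + 1)) := by
                apply mul_le_mul_of_nonneg_left _ (by norm_num)
                exact mul_le_mul_of_nonneg_right hne (by linarith)
            _ ≤ 84 * N * ((n - 1 : ℕ) : ℝ) := by
                nlinarith [mul_nonneg (show (0:ℝ) ≤ ((n - 1 : ℕ) : ℝ) by linarith)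
                  (show (0:ℝ) ≤ 52 * N - 32 by linarith)]
        have hF : (0:ℝ) ≤ (84 * N * Ms N s) ^ (n - 2) * Ms N s ^ 2 * t ^ (n - 1) :=
          mul_nonneg (mul_nonneg (pow_nonneg hCpos.le _) (sq_nonneg _)) (pow_nonneg ht.le _)
        have hmain := mul_le_mul_of_nonneg_right hsc hF
        calc (∑ k ∈ Finset.Ioo 0 n, ((k : ℝ) ^ 2)⁻¹ * (((n - k : ℕ) : ℝ) ^ 2)⁻¹) *
            (Ms N s ^ 2 * (84 * N * Ms N s) ^ (n - 2) * (t ^ (n - 1) / ((n - 1 : ℕ) : ℝ))) *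
            ((n : ℝ) * (N + 1))
            = (∑ k ∈ Finset.Ioo 0 n, ((k : ℝ) ^ 2)⁻¹ * (((n - k : ℕ) : ℝ) ^ 2)⁻¹) *
              ((n : ℝ) * (N + 1)) / ((n - 1 : ℕ) : ℝ) *
              ((84 * N * Ms N s) ^ (n - 2) * Ms N s ^ 2 * t ^ (n - 1)) := by ring
          _ ≤ 84 * N / (n : ℝ) ^ 2 *
              ((84 * N * Ms N s) ^ (n - 2) * Ms N s ^ 2 * t ^ (n - 1)) := hmain
          _ = DD N s n t := by
              have hsplit : (84 * N * Ms N s * t) ^ (n - 1)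
                  = (84 * N * Ms N s) ^ (n - 2) * (84 * N * Ms N s) * t ^ (n - 1) := by
                rw [mul_pow, ← pow_succ, show n - 2 + 1 = n - 1 by omega]
              unfold DD
              rw [hsplit, div_eq_mul_inv]
              ring

lemma rpow_two_half (x : ℝ≥0∞) : (x ^ 2) ^ ((1:ℝ)/2) = x := by
  rw [← ENNReal.rpow_natCast x 2, ← ENNReal.rpow_mul]
  norm_num

end S12

/-- `L¹`- and `L²`-bounds for the Kawahara Picard iterates with
datum `w_{N,s}`: `‖gₙ(t)‖_{L¹} ≤ (C₁ N t ‖w‖_{L¹})^{n−1} ‖w‖_{L¹}` and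
`‖gₙ(t)‖_{L²} ≤ (C₁ N t ‖w‖_{L¹})^{n−1} ‖w‖_{L²}`, with `C₁ > 1` independent of
`N`, `s`, `t`, `n` and `𝔟`. -/
theorem statement12 :
    ∃ C₁ : ℝ, 1 < C₁ ∧
      ∀ b : ℝ, b = -1 ∨ b = 0 ∨ b = 1 →
      ∀ N s : ℝ, 2 ≤ N →
      ∀ g : ℕ → ℝ → ℝ → ℂ, KawPicard b (wNs N s) g →
      ∀ t : ℝ, 0 < t → ∀ n : ℕ, 1 ≤ n →
        L1R (g n t) ≤
          (ENNReal.ofReal (C₁ * N * t) * L1R (wNs N s)) ^ (n - 1) * L1R (wNs N s) ∧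
        L2R (g n t) ≤
          (ENNReal.ofReal (C₁ * N * t) * L1R (wNs N s)) ^ (n - 1) * L2R (wNs N s) := by
  refine ⟨84, by norm_num, ?_⟩
  intro b _ N s hN g hg t ht n hn
  have hM := S12.Ms_pos hN s
  have hq : (0:ℝ) ≤ 84 * N * S12.Ms N s * t :=
    mul_nonneg (mul_nonneg (mul_nonneg (by norm_num) (by linarith)) hM.le) ht.le
  have h84Nt0 : (0:ℝ) ≤ 84 * N * t :=
    mul_nonneg (mul_nonneg (by norm_num) (by linarith)) ht.le
  have hL1w : L1R (wNs N s) = ENNReal.ofReal (S12.Ms N s) * 4 := by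
    unfold L1R
    rw [lintegral_congr (S12.nnnorm_wNs hN s),
      lintegral_const_mul' _ _ ENNReal.ofReal_ne_top, S12.lint_chi hN]
  have hL2w : L2R (wNs N s) = ENNReal.ofReal (S12.Ms N s) * 2 := by
    unfold L2R
    have hc : ∀ ξ : ℝ, ((‖wNs N s ξ‖₊ : ℝ≥0∞)) ^ 2
        = (ENNReal.ofReal (S12.Ms N s)) ^ 2 * S12.chi N ξ := by
      intro ξ
      rw [S12.nnnorm_wNs hN s ξ, mul_pow, S12.chi_sq]
    rw [lintegral_congr hc,
      lintegral_const_mul' _ _ (ENNReal.pow_ne_top ENNReal.ofReal_ne_top), S12.lint_chi hN,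
      show ((ENNReal.ofReal (S12.Ms N s)) ^ 2 * 4 : ℝ≥0∞)
        = (ENNReal.ofReal (S12.Ms N s) * 2) ^ 2 by ring,
      S12.rpow_two_half]
  have hkey := S12.key hN s b g hg n hn t ht
  have hDD_le : ENNReal.ofReal (S12.DD N s n t)
      ≤ ENNReal.ofReal ((84 * N * S12.Ms N s * t) ^ (n - 1) * S12.Ms N s) := by
    apply ENNReal.ofReal_le_ofReal
    unfold S12.DD
    have h1 : ((n : ℝ) ^ 2)⁻¹ ≤ 1 := by
      have hn1 : (1:ℝ) ≤ (n : ℝ) := by exact_mod_cast hn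
      have : (1:ℝ) ≤ (n : ℝ) ^ 2 := by nlinarith
      exact inv_le_one_of_one_le₀ this
    have h2 : (0:ℝ) ≤ (84 * N * S12.Ms N s * t) ^ (n - 1) * S12.Ms N s :=
      mul_nonneg (pow_nonneg hq _) hM.le
    calc ((n : ℝ) ^ 2)⁻¹ * (84 * N * S12.Ms N s * t) ^ (n - 1) * S12.Ms N s
        = ((n : ℝ) ^ 2)⁻¹ * ((84 * N * S12.Ms N s * t) ^ (n - 1) * S12.Ms N s) := by ring
      _ ≤ 1 * ((84 * N * S12.Ms N s * t) ^ (n - 1) * S12.Ms N s) :=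
          mul_le_mul_of_nonneg_right h1 h2
      _ = (84 * N * S12.Ms N s * t) ^ (n - 1) * S12.Ms N s := one_mul _
  have hofr : ENNReal.ofReal (84 * N * S12.Ms N s * t)
      = ENNReal.ofReal (84 * N * t) * ENNReal.ofReal (S12.Ms N s) := by
    rw [← ENNReal.ofReal_mul h84Nt0]
    congr 1
    ring
  have h4n : (4 : ℝ≥0∞) ^ n = 4 ^ (n - 1) * 4 := by
    rw [← pow_succ, show n - 1 + 1 = n by omega]
  have hofDD : ENNReal.ofReal ((84 * N * S12.Ms N s * t) ^ (n - 1) * S12.Ms N s)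
      = (ENNReal.ofReal (84 * N * t) * ENNReal.ofReal (S12.Ms N s)) ^ (n - 1) *
        ENNReal.ofReal (S12.Ms N s) := by
    rw [ENNReal.ofReal_mul (pow_nonneg hq _), ENNReal.ofReal_pow hq, hofr]
  constructor
  · -- L¹ bound
    rw [hL1w]
    calc L1R (g n t)
        ≤ ∫⁻ ξ, ENNReal.ofReal (S12.DD N s n t) * S12.P N (n - 1) ξ :=
          lintegral_mono fun ξ => hkey ξ
      _ = ENNReal.ofReal (S12.DD N s n t) * 4 ^ n := by
          rw [lintegral_const_mul' _ _ ENNReal.ofReal_ne_top, S12.lint_P hN,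
            show n - 1 + 1 = n by omega]
      _ ≤ ENNReal.ofReal ((84 * N * S12.Ms N s * t) ^ (n - 1) * S12.Ms N s) * 4 ^ n :=
          mul_le_mul_left hDD_le _
      _ = (ENNReal.ofReal (84 * N * t) * (ENNReal.ofReal (S12.Ms N s) * 4)) ^ (n - 1) *
          (ENNReal.ofReal (S12.Ms N s) * 4) := by
          rw [hofDD, h4n, mul_pow, mul_pow]
          ring
  · -- L² bound
    rw [hL2w, hL1w]
    have hbound : ∀ ξ : ℝ, ((‖g n t ξ‖₊ : ℝ≥0∞)) ^ 2
        ≤ (ENNReal.ofReal (S12.DD N s n t)) ^ 2 * 4 ^ (n - 1) * S12.P N (n - 1) ξ := by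
      intro ξ
      calc ((‖g n t ξ‖₊ : ℝ≥0∞)) ^ 2
          ≤ (ENNReal.ofReal (S12.DD N s n t) * S12.P N (n - 1) ξ) ^ 2 :=
            pow_le_pow_left₀ zero_le (hkey ξ) 2
        _ = (ENNReal.ofReal (S12.DD N s n t)) ^ 2 *
            (S12.P N (n - 1) ξ * S12.P N (n - 1) ξ) := by ring
        _ ≤ (ENNReal.ofReal (S12.DD N s n t)) ^ 2 *
            (4 ^ (n - 1) * S12.P N (n - 1) ξ) :=
            mul_le_mul_right (mul_le_mul_left (S12.P_le hN (n - 1) ξ) _) _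
        _ = (ENNReal.ofReal (S12.DD N s n t)) ^ 2 * 4 ^ (n - 1) * S12.P N (n - 1) ξ := by
            ring
    calc L2R (g n t)
        ≤ ((ENNReal.ofReal (S12.DD N s n t)) ^ 2 * 4 ^ (n - 1) * (4:ℝ≥0∞) ^ n) ^ ((1:ℝ)/2) := by
          unfold L2R
          apply ENNReal.rpow_le_rpow _ (by norm_num)
          calc ∫⁻ ξ, ((‖g n t ξ‖₊ : ℝ≥0∞)) ^ 2
              ≤ ∫⁻ ξ, (ENNReal.ofReal (S12.DD N s n t)) ^ 2 * 4 ^ (n - 1) *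
                S12.P N (n - 1) ξ := lintegral_mono hbound
            _ = (ENNReal.ofReal (S12.DD N s n t)) ^ 2 * 4 ^ (n - 1) * (4:ℝ≥0∞) ^ n := by
                rw [lintegral_const_mul' _ _ (ENNReal.mul_ne_top
                  (ENNReal.pow_ne_top ENNReal.ofReal_ne_top)
                  (ENNReal.pow_ne_top (by norm_num))), S12.lint_P hN,
                  show n - 1 + 1 = n by omega]
      _ = ENNReal.ofReal (S12.DD N s n t) * 4 ^ (n - 1) * 2 := by
          rw [show (ENNReal.ofReal (S12.DD N s n t)) ^ 2 * 4 ^ (n - 1) * (4:ℝ≥0∞) ^ n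
            = (ENNReal.ofReal (S12.DD N s n t) * 4 ^ (n - 1) * 2) ^ 2 by rw [h4n]; ring,
            S12.rpow_two_half]
      _ ≤ ENNReal.ofReal ((84 * N * S12.Ms N s * t) ^ (n - 1) * S12.Ms N s) * 4 ^ (n - 1) * 2 :=
          mul_le_mul_left (mul_le_mul_left hDD_le _) _
      _ = (ENNReal.ofReal (84 * N * t) * (ENNReal.ofReal (S12.Ms N s) * 4)) ^ (n - 1) *
          (ENNReal.ofReal (S12.Ms N s) * 2) := by
          rw [hofDD, mul_pow, mul_pow]
          ring

end
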